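/- Let θ be a collineation of a finite thick generalised quadrangle with parameters (s,t) having no fixed points and no fixed lines, which is domestic and maps at least one point and one line to opposites. Then (s+t) divides (st+1); in particular gcd(s,t) = 1 and |P₄| = (s²−1)(st+1)/(s+t). -/

import Mathlib

open SimpleGraph

/-- The incidence graph of a point-line geometry, on vertex set `P ⊕ L`. -/
def incGraph {P L : Type*} (inc : P → L → Prop) : SimpleGraph (P ⊕ L) where
  Adj x y := (∃ p l, x = Sum.inl p ∧ y = Sum.inr l ∧ inc p l) ∨
             (∃ p l, x = Sum.inr l ∧ y = Sum.inl p ∧ inc p l)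
  symm := by
    constructor
    rintro x y (⟨p, l, rfl, rfl, h⟩ | ⟨p, l, rfl, rfl, h⟩)
    · exact Or.inr ⟨p, l, rfl, rfl, h⟩
    · exact Or.inl ⟨p, l, rfl, rfl, h⟩
  loopless := by
    constructor
    rintro x (⟨p, l, rfl, h, _⟩ | ⟨p, l, rfl, h, _⟩) <;> exact nomatch h

/-- A (weak) generalised `n`-gon: the incidence graph is connected, has diameter `n` and
girth `2n`. -/
structure IsGenPolygon {P L : Type*} (n : ℕ) (inc : P → L → Prop) : Prop where
  connected : (incGraph inc).Connected
  dist_le : ∀ x y : P ⊕ L, (incGraph inc).dist x y ≤ n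
  exists_dist_eq : ∃ x y : P ⊕ L, (incGraph inc).dist x y = n
  girth_eq : (incGraph inc).girth = (2 * n : ℕ)

/-- Thickness: every point is on at least three lines and every line carries at least three
points. -/
def IsThick {P L : Type*} (inc : P → L → Prop) : Prop :=
  (∀ p : P, ∃ l₁ l₂ l₃ : L, inc p l₁ ∧ inc p l₂ ∧ inc p l₃ ∧ l₁ ≠ l₂ ∧ l₁ ≠ l₃ ∧ l₂ ≠ l₃) ∧
  (∀ l : L, ∃ p₁ p₂ p₃ : P, inc p₁ l ∧ inc p₂ l ∧ inc p₃ l ∧ p₁ ≠ p₂ ∧ p₁ ≠ p₃ ∧ p₂ ≠ p₃)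

/-- The geometry has parameters `(s, t)`: each line carries `s + 1` points and each point is
on `t + 1` lines. -/
def HasParams {P L : Type*} (inc : P → L → Prop) (s t : ℕ) : Prop :=
  (∀ l : L, Nat.card {p : P // inc p l} = s + 1) ∧
  (∀ p : P, Nat.card {l : L // inc p l} = t + 1)

/-- A collineation: a pair of permutations of the points and the lines preserving
incidence. -/
def IsCollineation {P L : Type*} (inc : P → L → Prop) (θP : Equiv.Perm P)
    (θL : Equiv.Perm L) : Prop :=
  ∀ p l, inc p l ↔ inc (θP p) (θL l)

/-- Two chambers `{p, l}` and `{p', l'}` of a generalised `m`-gon are opposite. -/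
def OppChambers {P L : Type*} (inc : P → L → Prop) (m : ℕ)
    (p p' : P) (l l' : L) : Prop :=
  ((incGraph inc).dist (Sum.inl p) (Sum.inl p') = m ∧
    (incGraph inc).dist (Sum.inr l) (Sum.inr l') = m) ∨
  ((incGraph inc).dist (Sum.inl p) (Sum.inr l') = m ∧
    (incGraph inc).dist (Sum.inr l) (Sum.inl p') = m)

/-- A collineation is domestic if it maps no chamber to an opposite chamber. -/
def IsDomesticColl {P L : Type*} (inc : P → L → Prop) (m : ℕ) (θP : Equiv.Perm P)
    (θL : Equiv.Perm L) : Prop :=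
  ¬ ∃ p l, inc p l ∧ OppChambers inc m p (θP p) l (θL l)

namespace GQaux

variable {P L : Type*} {inc : P → L → Prop}

lemma adj_inl_inr {p : P} {l : L} : (incGraph inc).Adj (Sum.inl p) (Sum.inr l) ↔ inc p l := by
  constructor
  · rintro (⟨p', l', h1, h2, h⟩ | ⟨p', l', h1, h2, h⟩)
    · obtain rfl : p = p' := by injection h1
      obtain rfl : l = l' := by injection h2
      exact h
    · exact absurd h1 (by simp)
  · intro h; exact Or.inl ⟨p, l, rfl, rfl, h⟩

lemma adj_inr_inl {p : P} {l : L} : (incGraph inc).Adj (Sum.inr l) (Sum.inl p) ↔ inc p l := by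
  rw [SimpleGraph.adj_comm]; exact adj_inl_inr

lemma not_adj_inl_inl {p q : P} : ¬ (incGraph inc).Adj (Sum.inl p) (Sum.inl q) := by
  rintro (⟨p', l', h1, h2, h⟩ | ⟨p', l', h1, h2, h⟩) <;> simp_all

lemma not_adj_inr_inr {l m : L} : ¬ (incGraph inc).Adj (Sum.inr l) (Sum.inr m) := by
  rintro (⟨p', l', h1, h2, h⟩ | ⟨p', l', h1, h2, h⟩) <;> simp_all

/-- side of a vertex -/
def side : P ⊕ L → ZMod 2 := Sum.elim (fun _ => 0) (fun _ => 1)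

lemma side_adj {x y : P ⊕ L} (h : (incGraph inc).Adj x y) : side y = side x + 1 := by
  rcases h with ⟨p, l, rfl, rfl, h⟩ | ⟨p, l, rfl, rfl, h⟩ <;> simp [side] <;> decide

lemma walk_parity {x y : P ⊕ L} (w : (incGraph inc).Walk x y) :
    (w.length : ZMod 2) = side y - side x := by
  induction w with
  | nil => simp
  | cons h w ih =>
      rw [Walk.length_cons]
      push_cast
      rw [ih, side_adj h]
      ring

lemma dist_parity (hconn : (incGraph inc).Connected) (x y : P ⊕ L) :
    ((incGraph inc).dist x y : ZMod 2) = side y - side x := by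
  obtain ⟨w, hw⟩ := hconn.exists_walk_length_eq_dist x y
  rw [← hw]; exact walk_parity w

lemma even_dist_inl_inl (hconn : (incGraph inc).Connected) (p q : P) :
    Even ((incGraph inc).dist (Sum.inl p) (Sum.inl q)) := by
  have h := dist_parity hconn (Sum.inl p) (Sum.inl q)
  simp [side] at h
  rw [ZMod.natCast_eq_zero_iff] at h; exact (even_iff_two_dvd).mpr h

lemma even_dist_inr_inr (hconn : (incGraph inc).Connected) (l m : L) :
    Even ((incGraph inc).dist (Sum.inr l) (Sum.inr m)) := by
  have h := dist_parity hconn (Sum.inr l) (Sum.inr m)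
  simp [side] at h
  rw [ZMod.natCast_eq_zero_iff] at h; exact (even_iff_two_dvd).mpr h

lemma odd_dist_inl_inr (hconn : (incGraph inc).Connected) (p : P) (l : L) :
    ¬ Even ((incGraph inc).dist (Sum.inl p) (Sum.inr l)) := by
  have h := dist_parity hconn (Sum.inl p) (Sum.inr l)
  simp [side] at h
  intro he
  obtain ⟨k, hk⟩ := he
  rw [hk] at h
  push_cast at h
  have : (2 : ZMod 2) = 0 := by decide
  rw [show ((k : ZMod 2) + k) = 2 * k by ring, this, zero_mul] at h
  exact one_ne_zero h.symm


lemma walk_len2 {V : Type*} {G : SimpleGraph V} {x z : V} (w : G.Walk x z)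
    (h : w.length = 2) : ∃ y, G.Adj x y ∧ G.Adj y z := by
  cases w with
  | nil => simp at h
  | cons ha w' =>
    cases w' with
    | nil => simp at h
    | cons hb w'' =>
      have h0 : w''.length = 0 := by
        simp only [Walk.length_cons] at h; omega
      exact ⟨_, ha, (w''.eq_of_length_eq_zero h0) ▸ hb⟩

lemma walk_len3 {V : Type*} {G : SimpleGraph V} {x z : V} (w : G.Walk x z)
    (h : w.length = 3) : ∃ y₁ y₂, G.Adj x y₁ ∧ G.Adj y₁ y₂ ∧ G.Adj y₂ z := by
  cases w with
  | nil => simp at h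
  | cons ha w' =>
    obtain ⟨y, hb, hc⟩ := walk_len2 w' (by simp only [Walk.length_cons] at h; omega)
    exact ⟨_, y, ha, hb, hc⟩

section DistChar

variable (hconn : (incGraph inc).Connected)
include hconn

lemma dist_inl_inl_ne_zero_iff (p q : P) :
    (incGraph inc).dist (Sum.inl p) (Sum.inl q) = 0 ↔ p = q := by
  rw [hconn.dist_eq_zero_iff]; simp

lemma dist_inr_inr_ne_zero_iff (l m : L) :
    (incGraph inc).dist (Sum.inr l) (Sum.inr m) = 0 ↔ l = m := by
  rw [hconn.dist_eq_zero_iff]; simp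

lemma dist_two_iff (p q : P) :
    (incGraph inc).dist (Sum.inl p) (Sum.inl q) = 2 ↔ p ≠ q ∧ ∃ l, inc p l ∧ inc q l := by
  constructor
  · intro h2
    have hne : p ≠ q := by
      rintro rfl; rw [SimpleGraph.dist_self] at h2; omega
    refine ⟨hne, ?_⟩
    obtain ⟨w, hw⟩ := hconn.exists_walk_length_eq_dist (Sum.inl p) (Sum.inl q)
    rw [h2] at hw
    obtain ⟨y, ha, hb⟩ := walk_len2 w hw
    rcases y with q' | l
    · exact absurd ha not_adj_inl_inl
    · exact ⟨l, adj_inl_inr.mp ha, adj_inr_inl.mp hb⟩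
  · rintro ⟨hne, l, h1, h2⟩
    have hle2 : (incGraph inc).dist (Sum.inl p) (Sum.inl q) ≤ 2 := by
      have := SimpleGraph.dist_le
        (Walk.cons (adj_inl_inr.mpr h1) (Walk.cons (adj_inr_inl.mpr h2) Walk.nil))
      simpa using this
    have hpos : 0 < (incGraph inc).dist (Sum.inl p) (Sum.inl q) :=
      hconn.pos_dist_of_ne (by simp [hne])
    obtain ⟨k, hk⟩ := even_dist_inl_inl hconn p q
    omega

lemma dist_two_iff' (l m : L) :
    (incGraph inc).dist (Sum.inr l) (Sum.inr m) = 2 ↔ l ≠ m ∧ ∃ p, inc p l ∧ inc p m := by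
  constructor
  · intro h2
    have hne : l ≠ m := by
      rintro rfl; rw [SimpleGraph.dist_self] at h2; omega
    refine ⟨hne, ?_⟩
    obtain ⟨w, hw⟩ := hconn.exists_walk_length_eq_dist (Sum.inr l) (Sum.inr m)
    rw [h2] at hw
    obtain ⟨y, ha, hb⟩ := walk_len2 w hw
    rcases y with p | l'
    · exact ⟨p, adj_inr_inl.mp ha, adj_inl_inr.mp hb⟩
    · exact absurd ha not_adj_inr_inr
  · rintro ⟨hne, p, h1, h2⟩
    have hle2 : (incGraph inc).dist (Sum.inr l) (Sum.inr m) ≤ 2 := by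
      have := SimpleGraph.dist_le
        (Walk.cons (adj_inr_inl.mpr h1) (Walk.cons (adj_inl_inr.mpr h2) Walk.nil))
      simpa using this
    have hpos : 0 < (incGraph inc).dist (Sum.inr l) (Sum.inr m) :=
      hconn.pos_dist_of_ne (by simp [hne])
    obtain ⟨k, hk⟩ := even_dist_inr_inr hconn l m
    omega

variable (hle : ∀ x y : P ⊕ L, (incGraph inc).dist x y ≤ 4)
include hle

lemma dist_four_iff (p q : P) :
    (incGraph inc).dist (Sum.inl p) (Sum.inl q) = 4 ↔ p ≠ q ∧ ¬ ∃ l, inc p l ∧ inc q l := by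
  have hcase : (incGraph inc).dist (Sum.inl p) (Sum.inl q) = 0 ∨
      (incGraph inc).dist (Sum.inl p) (Sum.inl q) = 2 ∨
      (incGraph inc).dist (Sum.inl p) (Sum.inl q) = 4 := by
    obtain ⟨k, hk⟩ := even_dist_inl_inl hconn p q
    have := hle (Sum.inl p) (Sum.inl q)
    omega
  constructor
  · intro h4
    have hne : p ≠ q := by
      rintro rfl; rw [SimpleGraph.dist_self] at h4; omega
    refine ⟨hne, fun hcol => ?_⟩
    have := (dist_two_iff hconn p q).mpr ⟨hne, hcol⟩
    omega
  · rintro ⟨hne, hncol⟩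
    rcases hcase with h | h | h
    · exact absurd ((dist_inl_inl_ne_zero_iff hconn p q).mp h) hne
    · exact absurd ((dist_two_iff hconn p q).mp h).2 hncol
    · exact h

lemma dist_four_iff' (l m : L) :
    (incGraph inc).dist (Sum.inr l) (Sum.inr m) = 4 ↔ l ≠ m ∧ ¬ ∃ p, inc p l ∧ inc p m := by
  have hcase : (incGraph inc).dist (Sum.inr l) (Sum.inr m) = 0 ∨
      (incGraph inc).dist (Sum.inr l) (Sum.inr m) = 2 ∨
      (incGraph inc).dist (Sum.inr l) (Sum.inr m) = 4 := by
    obtain ⟨k, hk⟩ := even_dist_inr_inr hconn l m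
    have := hle (Sum.inr l) (Sum.inr m)
    omega
  constructor
  · intro h4
    have hne : l ≠ m := by
      rintro rfl; rw [SimpleGraph.dist_self] at h4; omega
    refine ⟨hne, fun hcol => ?_⟩
    have := (dist_two_iff' hconn l m).mpr ⟨hne, hcol⟩
    omega
  · rintro ⟨hne, hncol⟩
    rcases hcase with h | h | h
    · exact absurd ((dist_inr_inr_ne_zero_iff hconn l m).mp h) hne
    · exact absurd ((dist_two_iff' hconn l m).mp h).2 hncol
    · exact h

/-- Projection existence: if `p` is not on `l`, there is a path `p ∈ m ∋ q ∈ l`. -/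
lemma exists_proj {p : P} {l : L} (h : ¬ inc p l) :
    ∃ (q : P) (m : L), inc p m ∧ inc q m ∧ inc q l := by
  have hodd := odd_dist_inl_inr hconn p l
  have h4 := hle (Sum.inl p) (Sum.inr l)
  have h1 : (incGraph inc).dist (Sum.inl p) (Sum.inr l) ≠ 1 := by
    intro h1
    exact h (adj_inl_inr.mp (SimpleGraph.dist_eq_one_iff_adj.mp h1))
  have h3 : (incGraph inc).dist (Sum.inl p) (Sum.inr l) = 3 := by
    rw [Nat.even_iff] at hodd
    omega
  obtain ⟨w, hw⟩ := hconn.exists_walk_length_eq_dist (Sum.inl p) (Sum.inr l)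
  rw [h3] at hw
  obtain ⟨y₁, y₂, ha, hb, hc⟩ := walk_len3 w hw
  rcases y₁ with q' | m
  · exact absurd ha not_adj_inl_inl
  · rcases y₂ with q | m'
    · exact ⟨q, m, adj_inl_inr.mp ha, adj_inr_inl.mp hb, adj_inl_inr.mp hc⟩
    · exact absurd hc not_adj_inr_inr

end DistChar

section Girth

lemma girth_cycles (hg : (incGraph inc).girth = 8) :
    ∀ ⦃a : P ⊕ L⦄ (w : (incGraph inc).Walk a a), w.IsCycle → 8 ≤ w.length := by
  have heg : (incGraph inc).egirth = (8 : ℕ) := by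
    rw [← ENat.toNat_eq_iff (by norm_num)]
    exact hg
  intro a w hw
  have := le_egirth.mp (le_of_eq heg.symm) a w hw
  exact_mod_cast this

variable (hg8 : ∀ ⦃a : P ⊕ L⦄ (w : (incGraph inc).Walk a a), w.IsCycle → 8 ≤ w.length)
include hg8

/-- Two points on two common lines: the lines agree. -/
lemma unique_line {p q : P} {l m : L} (hpq : p ≠ q) (hpl : inc p l) (hql : inc q l)
    (hpm : inc p m) (hqm : inc q m) : l = m := by
  by_contra hlm
  have hc : (Walk.cons (adj_inl_inr.mpr hpl) (Walk.cons (adj_inr_inl.mpr hql)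
      (Walk.cons (adj_inl_inr.mpr hqm) (Walk.cons (adj_inr_inl.mpr hpm)
        Walk.nil)))).IsCycle := by
    simp [Walk.isCycle_def, Walk.isTrail_def, List.Nodup]
    aesop
  have := hg8 _ hc
  simp at this

/-- No triangles. -/
lemma no_triangle {p q r : P} {A B C : L} (hpA : inc p A) (hqA : inc q A)
    (hqB : inc q B) (hrB : inc r B) (hrC : inc r C) (hpC : inc p C)
    (hpq : p ≠ q) (hqr : q ≠ r) (hpr : p ≠ r)
    (hAB : A ≠ B) (hBC : B ≠ C) (hAC : A ≠ C) : False := by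
  have hc : (Walk.cons (adj_inl_inr.mpr hpA) (Walk.cons (adj_inr_inl.mpr hqA)
      (Walk.cons (adj_inl_inr.mpr hqB) (Walk.cons (adj_inr_inl.mpr hrB)
        (Walk.cons (adj_inl_inr.mpr hrC) (Walk.cons (adj_inr_inl.mpr hpC)
          Walk.nil)))))).IsCycle := by
    simp [Walk.isCycle_def, Walk.isTrail_def, List.Nodup]
    aesop
  have := hg8 _ hc
  simp at this

end Girth

end GQaux

namespace GQaux2

section Helpers

variable {α : Type*}

lemma card_split_ne [Finite α] {S : α → Prop} {a : α} (ha : S a) :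
    Nat.card {x // S x} = Nat.card {x // S x ∧ x ≠ a} + 1 := by
  classical
  haveI : Unique {y : {x // S x} // (y : α) = a} :=
    ⟨⟨⟨⟨a, ha⟩, rfl⟩⟩, fun y => Subtype.ext (Subtype.ext y.2)⟩
  have e := (Equiv.sumCompl (fun y : {x // S x} => (y : α) = a)).symm
  rw [Nat.card_congr e, Nat.card_sum]
  have e2 : {y : {x // S x} // ¬ (y : α) = a} ≃ {x // S x ∧ x ≠ a} :=
    Equiv.subtypeSubtypeEquivSubtypeInter S (· ≠ a)
  rw [Nat.card_congr e2, Nat.card_unique]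
  omega

lemma card_split_ne2 [Finite α] {S : α → Prop} {a b : α} (ha : S a) (hb : S b) (hab : a ≠ b) :
    Nat.card {x // S x} = Nat.card {x // S x ∧ x ≠ a ∧ x ≠ b} + 2 := by
  classical
  rw [card_split_ne ha]
  have h2 : Nat.card {x // S x ∧ x ≠ a} = Nat.card {x // (S x ∧ x ≠ a) ∧ x ≠ b} + 1 :=
    card_split_ne (S := fun x => S x ∧ x ≠ a) (a := b) ⟨hb, fun h => hab h.symm⟩
  have e : {x // (S x ∧ x ≠ a) ∧ x ≠ b} ≃ {x // S x ∧ x ≠ a ∧ x ≠ b} :=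
    Equiv.subtypeEquivRight (fun x => by tauto)
  rw [Nat.card_congr e] at h2
  omega

lemma card_sigma_const {ι : Type*} [Finite ι] {κ : ι → Type*} [∀ i, Finite (κ i)] {n : ℕ}
    (h : ∀ i, Nat.card (κ i) = n) : Nat.card (Σ i, κ i) = Nat.card ι * n := by
  classical
  cases nonempty_fintype ι
  haveI : ∀ i, Fintype (κ i) := fun i => Fintype.ofFinite _
  rw [Nat.card_eq_fintype_card, Nat.card_eq_fintype_card, Fintype.card_sigma]
  have hc : ∀ i, Fintype.card (κ i) = n := fun i => by
    rw [← Nat.card_eq_fintype_card]; exact h i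
  simp [hc, Finset.sum_const, mul_comm]

lemma card_partition [Finite α] (Q : α → Prop) :
    Nat.card {x // Q x} + Nat.card {x // ¬ Q x} = Nat.card α := by
  classical
  rw [← Nat.card_sum, Nat.card_congr (Equiv.sumCompl Q)]

end Helpers

section Core

variable {P L : Type*}

/-- collinearity (reflexive whenever `p` lies on some line) -/
def Col (inc : P → L → Prop) (p q : P) : Prop := ∃ l, inc p l ∧ inc q l

lemma Col.symm {inc : P → L → Prop} {p q : P} (h : Col inc p q) : Col inc q p := by
  obtain ⟨l, h1, h2⟩ := h; exact ⟨l, h2, h1⟩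

/-- Combinatorial axioms for a finite generalised quadrangle of order `(s,t)`. -/
structure Ax (inc : P → L → Prop) (s t : ℕ) : Prop where
  ptcard : ∀ l, Nat.card {p : P // inc p l} = s + 1
  lncard : ∀ p, Nat.card {l : L // inc p l} = t + 1
  uline : ∀ {p q : P} {l m : L}, p ≠ q → inc p l → inc q l → inc p m → inc q m → l = m
  notri : ∀ {p q r : P} {A B C : L}, inc p A → inc q A → inc q B → inc r B → inc r C →
    inc p C → p ≠ q → q ≠ r → p ≠ r → A ≠ B → B ≠ C → A ≠ C → False
  proj : ∀ {p : P} {l : L}, ¬ inc p l → ∃ (q : P) (m : L), inc p m ∧ inc q m ∧ inc q l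

/-- Uniqueness of the common point of two distinct lines. -/
lemma Ax.upoint {inc : P → L → Prop} {s t : ℕ} (ax : Ax inc s t) {l m : L} {z z' : P}
    (hlm : l ≠ m) (h1 : inc z l) (h2 : inc z m) (h3 : inc z' l) (h4 : inc z' m) : z = z' := by
  by_contra h
  exact hlm (ax.uline h h1 h3 h2 h4)

lemma Ax.dual {inc : P → L → Prop} {s t : ℕ} (ax : Ax inc s t) :
    Ax (fun (l : L) (p : P) => inc p l) t s where
  ptcard := ax.lncard
  lncard := ax.ptcard
  uline := by
    intro l m p q hlm hpl hpm hql hqm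
    exact ax.upoint hlm hpl hpm hql hqm
  notri := by
    intro p q r A B C h1 h2 h3 h4 h5 h6 hpq hqr hpr hAB hBC hAC
    exact ax.notri h2 h3 h4 h5 h6 h1 hAB hBC hAC hqr (Ne.symm hpr) (Ne.symm hpq)
  proj := by
    intro l p h
    obtain ⟨q, m, h1, h2, h3⟩ := ax.proj h
    exact ⟨m, q, h3, h2, h1⟩

variable {inc : P → L → Prop} {s t : ℕ} [Finite P] [Finite L]

lemma Ax.exists_line (ax : Ax inc s t) (p : P) : ∃ l, inc p l := by
  have h := ax.lncard p
  have : Nonempty {l // inc p l} := Nat.card_pos_iff.mp (by omega) |>.1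
  obtain ⟨⟨l, hl⟩⟩ := this
  exact ⟨l, hl⟩

lemma Ax.col_refl (ax : Ax inc s t) (p : P) : Col inc p p := by
  obtain ⟨l, hl⟩ := ax.exists_line p; exact ⟨l, hl, hl⟩

lemma Ax.ne_of_not_col (ax : Ax inc s t) {p q : P} (h : ¬ Col inc p q) : p ≠ q := by
  rintro rfl; exact h (ax.col_refl p)

/-- Uniqueness of projections. -/
lemma Ax.proj_unique (ax : Ax inc s t) {p : P} {l : L} (hpl : ¬ inc p l)
    {q q' : P} {m m' : L} (h1 : inc p m) (h2 : inc q m) (h3 : inc q l)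
    (h1' : inc p m') (h2' : inc q' m') (h3' : inc q' l) : q = q' ∧ m = m' := by
  have hpq : p ≠ q := by rintro rfl; exact hpl h3
  have hpq' : p ≠ q' := by rintro rfl; exact hpl h3'
  by_cases hqq : q = q'
  · subst hqq
    exact ⟨rfl, ax.uline hpq h1 h2 h1' h2'⟩
  · exfalso
    by_cases hmm : m = m'
    · subst hmm
      have hml : m = l := ax.uline hqq h2 h2' h3 h3'
      exact hpl (hml ▸ h1)
    · have hml : m ≠ l := fun h => hpl (h ▸ h1)
      have hm'l : m' ≠ l := fun h => hpl (h ▸ h1')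
      exact ax.notri h1 h2 h3 h3' h2' h1' hpq hqq hpq' hml (Ne.symm hm'l) hmm

/-- number of points collinear with (and distinct from) a point -/
lemma Ax.card_neigh (ax : Ax inc s t) (x : P) :
    Nat.card {y : P // Col inc x y ∧ y ≠ x} = (t + 1) * s := by
  classical
  let F : (Σ l : {l // inc x l}, {y : P // inc y l.1 ∧ y ≠ x}) →
      {y : P // Col inc x y ∧ y ≠ x} :=
    fun z => ⟨z.2.1, ⟨z.1.1, z.1.2, z.2.2.1⟩, z.2.2.2⟩
  have hF : Function.Bijective F := by
    constructor
    · rintro ⟨⟨l, hl⟩, ⟨y, hy, hyx⟩⟩ ⟨⟨l', hl'⟩, ⟨y', hy', hyx'⟩⟩ h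
      have hyy : y = y' := congrArg Subtype.val h
      subst hyy
      have hll : l = l' := ax.uline (Ne.symm hyx) hl hy hl' hy'
      subst hll
      rfl
    · rintro ⟨y, ⟨l, hxl, hyl⟩, hyx⟩
      exact ⟨⟨⟨l, hxl⟩, ⟨y, hyl, hyx⟩⟩, rfl⟩
  rw [← Nat.card_eq_of_bijective F hF]
  have hfib : ∀ l : {l // inc x l}, Nat.card {y : P // inc y l.1 ∧ y ≠ x} = s := by
    intro l
    have h : Nat.card {p : P // inc p l.1} = Nat.card {y : P // inc y l.1 ∧ y ≠ x} + 1 :=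
      card_split_ne l.2
    rw [ax.ptcard l.1] at h
    omega
  rw [card_sigma_const hfib, ax.lncard x]

/-- number of points opposite a point -/
lemma Ax.card_opp (ax : Ax inc s t) (x : P) :
    Nat.card {y : P // ¬ Col inc x y} = s * (t * s) := by
  classical
  obtain ⟨l₀, hl₀⟩ := ax.exists_line x
  have key : ∀ (z : P) (m : L) (y : P), inc z l₀ → z ≠ x → inc z m → m ≠ l₀ →
      inc y m → y ≠ z → ¬ Col inc x y := by
    intro z m y hzl hzx hzm hml hym hyz
    rintro ⟨n, hxn, hyn⟩
    have hxm : ¬ inc x m := fun hxm => hml (ax.uline (Ne.symm hzx) hxm hzm hl₀ hzl)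
    have hyl : ¬ inc y l₀ := fun hyl => hml (ax.uline hyz hym hzm hyl hzl)
    have hyx : x ≠ y := fun h => hxm (h ▸ hym)
    have hnm : n ≠ m := fun h => hxm (h ▸ hxn)
    have hnl : n ≠ l₀ := fun h => hyl (h ▸ hyn)
    exact ax.notri hl₀ hzl hzm hym hyn hxn (Ne.symm hzx) (Ne.symm hyz) hyx
      (Ne.symm hml) (Ne.symm hnm) (Ne.symm hnl)
  let F : (Σ (z : {z : P // inc z l₀ ∧ z ≠ x}), Σ (m : {m : L // inc z.1 m ∧ m ≠ l₀}),
      {y : P // inc y m.1 ∧ y ≠ z.1}) → {y : P // ¬ Col inc x y} :=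
    fun w => ⟨w.2.2.1, key w.1.1 w.2.1.1 w.2.2.1 w.1.2.1 w.1.2.2 w.2.1.2.1 w.2.1.2.2
      w.2.2.2.1 w.2.2.2.2⟩
  have hF : Function.Bijective F := by
    constructor
    · rintro ⟨⟨z, hzl, hzx⟩, ⟨m, hzm, hml⟩, ⟨y, hym, hyz⟩⟩
        ⟨⟨z', hzl', hzx'⟩, ⟨m', hzm', hml'⟩, ⟨y', hym', hyz'⟩⟩ h
      have hyy : y = y' := congrArg Subtype.val h
      subst hyy
      have hylo : ¬ inc y l₀ := fun hyl => hml (ax.uline hyz hym hzm hyl hzl)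
      obtain ⟨hz, hm⟩ := ax.proj_unique hylo hym hzm hzl hym' hzm' hzl'
      subst hz; subst hm
      rfl
    · rintro ⟨y, hy⟩
      have hyl : ¬ inc y l₀ := fun hyl => hy ⟨l₀, hl₀, hyl⟩
      obtain ⟨z, m, hym, hzm, hzl⟩ := ax.proj hyl
      have hzx : z ≠ x := by rintro rfl; exact hy ⟨m, hzm, hym⟩
      have hml : m ≠ l₀ := by rintro rfl; exact hyl hym
      have hyz : y ≠ z := by rintro rfl; exact hyl hzl
      exact ⟨⟨⟨z, hzl, hzx⟩, ⟨m, hzm, hml⟩, ⟨y, hym, hyz⟩⟩, Subtype.ext rfl⟩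
  rw [← Nat.card_eq_of_bijective F hF]
  have hout : Nat.card {z : P // inc z l₀ ∧ z ≠ x} = s := by
    have h : Nat.card {p : P // inc p l₀} = Nat.card {z : P // inc z l₀ ∧ z ≠ x} + 1 :=
      card_split_ne hl₀
    rw [ax.ptcard l₀] at h
    omega
  have hfib : ∀ z : {z : P // inc z l₀ ∧ z ≠ x},
      Nat.card (Σ (m : {m : L // inc z.1 m ∧ m ≠ l₀}), {y : P // inc y m.1 ∧ y ≠ z.1}) =
        t * s := by
    intro z
    have hmid : Nat.card {m : L // inc z.1 m ∧ m ≠ l₀} = t := by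
      have h : Nat.card {l : L // inc z.1 l} = Nat.card {m : L // inc z.1 m ∧ m ≠ l₀} + 1 :=
        card_split_ne z.2.1
      rw [ax.lncard z.1] at h
      omega
    have hin : ∀ m : {m : L // inc z.1 m ∧ m ≠ l₀},
        Nat.card {y : P // inc y m.1 ∧ y ≠ z.1} = s := by
      intro m
      have h : Nat.card {p : P // inc p m.1} = Nat.card {y : P // inc y m.1 ∧ y ≠ z.1} + 1 :=
        card_split_ne m.2.1
      rw [ax.ptcard m.1] at h
      omega
    rw [card_sigma_const hin, hmid]
  rw [card_sigma_const hfib, hout]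

/-- the total number of points -/
lemma Ax.card_total (ax : Ax inc s t) (x : P) :
    Nat.card P = (s + 1) * (s * t + 1) := by
  classical
  have h1 := card_partition (fun y : P => Col inc x y)
  have h2 : Nat.card {y : P // Col inc x y} = (t + 1) * s + 1 := by
    have h : Nat.card {y : P // Col inc x y} = Nat.card {y : P // Col inc x y ∧ y ≠ x} + 1 :=
      card_split_ne (ax.col_refl x)
    rw [ax.card_neigh x] at h
    omega
  rw [h2, ax.card_opp x] at h1
  have : (t + 1) * s + 1 + s * (t * s) = (s + 1) * (s * t + 1) := by ring
  omega

/-- common neighbours of two distinct collinear points -/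
lemma Ax.card_common_col (ax : Ax inc s t) {p q : P} (hne : p ≠ q) (h : Col inc p q)
    (hs : 1 ≤ s) :
    Nat.card {z : P // (Col inc p z ∧ z ≠ p) ∧ Col inc q z ∧ z ≠ q} = s - 1 := by
  classical
  obtain ⟨n, hpn, hqn⟩ := h
  have e : {z : P // (Col inc p z ∧ z ≠ p) ∧ Col inc q z ∧ z ≠ q} ≃
      {z : P // inc z n ∧ z ≠ p ∧ z ≠ q} := by
    refine Equiv.subtypeEquivRight (fun z => ?_)
    constructor
    · rintro ⟨⟨⟨A, hpA, hzA⟩, hzp⟩, ⟨B, hqB, hzB⟩, hzq⟩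
      refine ⟨?_, hzp, hzq⟩
      by_contra hzn
      have hAn : A ≠ n := fun h => hzn (h ▸ hzA)
      have hBn : B ≠ n := fun h => hzn (h ▸ hzB)
      by_cases hAB : A = B
      · subst hAB
        exact hAn (ax.uline hne hpA hqB hpn hqn)
      · exact ax.notri hpA hzA hzB hqB hqn hpn (Ne.symm hzp) hzq hne hAB hBn hAn
    · rintro ⟨hzn, hzp, hzq⟩
      exact ⟨⟨⟨n, hpn, hzn⟩, hzp⟩, ⟨n, hqn, hzn⟩, hzq⟩
  rw [Nat.card_congr e]
  have h2 : Nat.card {z : P // inc z n} =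
      Nat.card {z : P // inc z n ∧ z ≠ p ∧ z ≠ q} + 2 := card_split_ne2 hpn hqn hne
  rw [ax.ptcard n] at h2
  omega

/-- common neighbours of two opposite points -/
lemma Ax.card_common_opp (ax : Ax inc s t) {p q : P} (h : ¬ Col inc p q) :
    Nat.card {z : P // (Col inc p z ∧ z ≠ p) ∧ Col inc q z ∧ z ≠ q} = t + 1 := by
  classical
  have hne : p ≠ q := ax.ne_of_not_col h
  have key : ∀ m : {m : L // inc p m}, ¬ inc q m.1 := fun m hqm => h ⟨m.1, m.2, hqm⟩
  choose z B h1 h2 h3 using fun m : {m : L // inc p m} => ax.proj (key m)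
  let F : {m : L // inc p m} → {z : P // (Col inc p z ∧ z ≠ p) ∧ Col inc q z ∧ z ≠ q} := by
    refine fun m => ⟨z m, ⟨⟨m.1, m.2, h3 m⟩, ?_⟩, ⟨B m, h1 m, h2 m⟩, ?_⟩
    · intro hzp
      exact h ⟨B m, hzp ▸ h2 m, h1 m⟩
    · intro hzq
      exact key m (hzq ▸ h3 m)
  have hF : Function.Bijective F := by
    constructor
    · rintro m m' hFeq
      have hzz : z m = z m' := congrArg Subtype.val hFeq
      have hzp : z m ≠ p := fun hzp => h ⟨B m, hzp ▸ h2 m, h1 m⟩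
      refine Subtype.ext (ax.uline (Ne.symm hzp) m.2 (h3 m) m'.2 (hzz ▸ h3 m') : m.1 = m'.1)
    · rintro ⟨w, ⟨⟨A, hpA, hwA⟩, hwp⟩, ⟨C, hqC, hwC⟩, hwq⟩
      refine ⟨⟨A, hpA⟩, Subtype.ext ?_⟩
      have hqA : ¬ inc q A := key ⟨A, hpA⟩
      exact (ax.proj_unique hqA (h1 ⟨A, hpA⟩) (h2 ⟨A, hpA⟩) (h3 ⟨A, hpA⟩) hqC hwC hwA).1
  have hcard := Nat.card_eq_of_bijective F hF
  rw [← hcard, ax.lncard p]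

/-- Per-line count: a line meeting its image carries exactly `s - 1` points opposite
their images. -/
lemma Ax.perline (ax : Ax inc s t) (θP : Equiv.Perm P) (θL : Equiv.Perm L)
    (hcoll : ∀ p l, inc p l ↔ inc (θP p) (θL l))
    (hnP : ∀ p, θP p ≠ p) (hnL : ∀ l, θL l ≠ l)
    {l : L} (hm : ∃ x, inc x l ∧ inc x (θL l)) :
    Nat.card {p : P // inc p l ∧ ¬ Col inc p (θP p)} = s - 1 := by
  classical
  obtain ⟨x, hxl, hxθ⟩ := hm
  set x' := θP.symm x with hx'def
  have hθx' : θP x' = x := θP.apply_symm_apply x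
  have hx'l : inc x' l := by
    rw [hcoll x' l, hθx']; exact hxθ
  have hxx' : x ≠ x' := by
    intro hh
    exact hnP x' (by rw [hθx', hh])
  have hlθ : l ≠ θL l := Ne.symm (hnL l)
  have e : {p : P // inc p l ∧ ¬ Col inc p (θP p)} ≃ {p : P // inc p l ∧ p ≠ x ∧ p ≠ x'} := by
    refine Equiv.subtypeEquivRight (fun p => ?_)
    constructor
    · rintro ⟨hpl, hcol⟩
      refine ⟨hpl, ?_, ?_⟩
      · rintro rfl
        exact hcol ⟨θL l, hxθ, (hcoll p l).mp hpl⟩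
      · rintro rfl
        exact hcol ⟨l, hx'l, hθx' ▸ hxl⟩
    · rintro ⟨hpl, hpx, hpx'⟩
      refine ⟨hpl, ?_⟩
      rintro ⟨n, hpn, hθpn⟩
      have hθpθl : inc (θP p) (θL l) := (hcoll p l).mp hpl
      have hθpx : θP p ≠ x := by
        intro hh
        exact hpx' (by rw [hx'def, ← hh, Equiv.symm_apply_apply])
      by_cases hnl : n = l
      · subst hnl
        exact hθpx (ax.upoint hlθ hθpn hθpθl hxl hxθ)
      · by_cases hnθl : n = θL l
        · subst hnθl
          exact hpx (ax.upoint hlθ hpl hpn hxl hxθ)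
        · exact ax.notri hpn hθpn hθpθl hxθ hxl hpl (Ne.symm (hnP p)) hθpx hpx
            hnθl hlθ.symm hnl
  rw [Nat.card_congr e]
  have h2 : Nat.card {p : P // inc p l} =
      Nat.card {p : P // inc p l ∧ p ≠ x ∧ p ≠ x'} + 2 := card_split_ne2 hxl hx'l hxx'
  rw [ax.ptcard l] at h2
  omega

/-- The flag double count. -/
lemma Ax.keycount (ax : Ax inc s t) (θP : Equiv.Perm P) (θL : Equiv.Perm L)
    (hcoll : ∀ p l, inc p l ↔ inc (θP p) (θL l))
    (hnP : ∀ p, θP p ≠ p) (hnL : ∀ l, θL l ≠ l)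
    (hdom : ∀ p l, inc p l → ¬ Col inc p (θP p) → ∃ x, inc x l ∧ inc x (θL l)) :
    Nat.card {p : P // ¬ Col inc p (θP p)} * (t + 1) =
      Nat.card {l : L // ∃ x, inc x l ∧ inc x (θL l)} * (s - 1) := by
  classical
  have e1 : {x : P × L // inc x.1 x.2 ∧ ¬ Col inc x.1 (θP x.1)} ≃
      Σ (p : {p : P // ¬ Col inc p (θP p)}), {l : L // inc p.1 l} :=
    { toFun := fun x => ⟨⟨x.1.1, x.2.2⟩, ⟨x.1.2, x.2.1⟩⟩
      invFun := fun y => ⟨(y.1.1, y.2.1), y.2.2, y.1.2⟩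
      left_inv := fun x => rfl
      right_inv := fun y => rfl }
  have e2 : {x : P × L // inc x.1 x.2 ∧ ¬ Col inc x.1 (θP x.1)} ≃
      Σ (l : {l : L // ∃ x, inc x l ∧ inc x (θL l)}),
        {p : P // inc p l.1 ∧ ¬ Col inc p (θP p)} :=
    { toFun := fun x => ⟨⟨x.1.2, hdom x.1.1 x.1.2 x.2.1 x.2.2⟩, ⟨x.1.1, x.2.1, x.2.2⟩⟩
      invFun := fun y => ⟨(y.2.1, y.1.1), y.2.2.1, y.2.2.2⟩
      left_inv := fun x => rfl
      right_inv := fun y => rfl }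
  have c1 : Nat.card {x : P × L // inc x.1 x.2 ∧ ¬ Col inc x.1 (θP x.1)} =
      Nat.card {p : P // ¬ Col inc p (θP p)} * (t + 1) := by
    rw [Nat.card_congr e1]
    exact card_sigma_const (fun p => ax.lncard p.1)
  have c2 : Nat.card {x : P × L // inc x.1 x.2 ∧ ¬ Col inc x.1 (θP x.1)} =
      Nat.card {l : L // ∃ x, inc x l ∧ inc x (θL l)} * (s - 1) := by
    rw [Nat.card_congr e2]
    exact card_sigma_const
      (fun l => ax.perline θP θL hcoll hnP hnL l.2)
  rw [← c1, c2]

end Core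


section TraceIdem

lemma trace_idem {n : Type*} [Fintype n] [DecidableEq n] {M : Matrix n n ℚ}
    (h : M * M = M) : ∃ N : ℕ, M.trace = (N : ℚ) := by
  have hf : (Matrix.toLin' M) ∘ₗ (Matrix.toLin' M) = Matrix.toLin' M := by
    rw [← Matrix.toLin'_mul, h]
  obtain ⟨p, hp⟩ := (LinearMap.isProj_iff_isIdempotentElem _).mpr hf
  have ht := hp.trace
  rw [LinearMap.trace_eq_matrix_trace ℚ (Pi.basisFun ℚ n) (Matrix.toLin' M),
    LinearMap.toMatrix_eq_toMatrix', LinearMap.toMatrix'_toLin'] at ht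
  exact ⟨Module.finrank ℚ p, ht⟩

end TraceIdem

section Higman

variable {P L : Type*} {inc : P → L → Prop} {s t : ℕ} [Finite P] [Finite L]

lemma sum_boole_mul_boole [Fintype P] (C1 C2 : P → Prop) [DecidablePred C1] [DecidablePred C2] :
    ∑ r : P, (if C1 r then (1:ℚ) else 0) * (if C2 r then (1:ℚ) else 0) =
      (Nat.card {z : P // C1 z ∧ C2 z} : ℚ) := by
  classical
  have h1 : ∀ r : P, (if C1 r then (1:ℚ) else 0) * (if C2 r then (1:ℚ) else 0) =
      (if C1 r ∧ C2 r then (1:ℚ) else 0) := by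
    intro r
    by_cases h1 : C1 r <;> by_cases h2 : C2 r <;> simp [h1, h2]
  rw [Finset.sum_congr rfl (fun r _ => h1 r)]
  rw [Finset.sum_boole]
  rw [Nat.card_eq_fintype_card, Fintype.card_subtype]

lemma sum_boole_one [Fintype P] (C1 : P → Prop) [DecidablePred C1] :
    ∑ r : P, (if C1 r then (1:ℚ) else 0) = (Nat.card {z : P // C1 z} : ℚ) := by
  classical
  rw [Finset.sum_boole, Nat.card_eq_fintype_card, Fintype.card_subtype]

lemma Ax.higman (ax : Ax inc s t) (x₀ : P) (hs : 1 ≤ s) :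
    (s + t) ∣ s * t * (s + 1) * (t + 1) := by
  classical
  cases nonempty_fintype P
  set S : ℚ := (s : ℚ) with hS
  set T : ℚ := (t : ℚ) with hT
  set A : Matrix P P ℚ := Matrix.of fun p q => if Col inc p q ∧ p ≠ q then (1:ℚ) else 0
    with hA
  set J : Matrix P P ℚ := Matrix.of fun _ _ => (1:ℚ) with hJ
  have hApq : ∀ p q : P, A p q = if Col inc p q ∧ p ≠ q then (1:ℚ) else 0 := fun p q => rfl
  -- the number of neighbours, as the set appears below
  have hneigh : ∀ p : P, Nat.card {z : P // Col inc p z ∧ p ≠ z} = (t+1) * s := by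
    intro p
    rw [Nat.card_congr (Equiv.subtypeEquivRight (q := fun z => Col inc p z ∧ z ≠ p)
      (fun z => by constructor <;> exact fun h => ⟨h.1, h.2.symm⟩))]
    exact ax.card_neigh p
  have hneigh' : ∀ q : P, Nat.card {z : P // Col inc z q ∧ z ≠ q} = (t+1) * s := by
    intro q
    rw [Nat.card_congr (Equiv.subtypeEquivRight (q := fun z => Col inc q z ∧ z ≠ q)
      (fun z => by constructor <;> exact fun h => ⟨h.1.symm, h.2⟩))]
    exact ax.card_neigh q
  -- A * A entries
  have hA2 : ∀ p q : P, (A * A) p q =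
      (Nat.card {z : P // (Col inc p z ∧ p ≠ z) ∧ Col inc z q ∧ z ≠ q} : ℚ) := by
    intro p q
    rw [Matrix.mul_apply]
    simpa [hApq] using sum_boole_mul_boole (fun z => Col inc p z ∧ p ≠ z)
      (fun z => Col inc z q ∧ z ≠ q)
  have hv : (Nat.card P : ℚ) = (S + 1) * (S * T + 1) := by
    rw [ax.card_total x₀]; push_cast; ring
  -- matrix identities
  have hJJ : J * J = ((S + 1) * (S * T + 1)) • J := by
    ext p q
    rw [Matrix.mul_apply]
    simp only [hJ, Matrix.smul_apply, Matrix.of_apply, smul_eq_mul, mul_one]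
    rw [Finset.sum_const, Finset.card_univ, nsmul_eq_mul, ← Nat.card_eq_fintype_card, hv]
    ring
  have hAJ : A * J = ((T + 1) * S) • J := by
    ext p q
    rw [Matrix.mul_apply]
    simp only [hJ, Matrix.smul_apply, Matrix.of_apply, smul_eq_mul, mul_one]
    have := sum_boole_one (fun z => Col inc p z ∧ p ≠ z)
    simp only [hApq]
    rw [this, hneigh p]
    push_cast; ring
  have hJA : J * A = ((T + 1) * S) • J := by
    ext p q
    rw [Matrix.mul_apply]
    simp only [hJ, Matrix.smul_apply, Matrix.of_apply, smul_eq_mul, one_mul, mul_one]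
    have := sum_boole_one (fun z => Col inc z q ∧ z ≠ q)
    simp only [hApq]
    rw [this, hneigh' q]
    push_cast; ring
  have hAA : A * A = ((T+1) * S) • (1 : Matrix P P ℚ) + (S - 1) • A +
      (T + 1) • (J - 1 - A) := by
    ext p q
    rw [hA2 p q]
    by_cases hpq : p = q
    · subst hpq
      have hcard : Nat.card {z : P // (Col inc p z ∧ p ≠ z) ∧ Col inc z p ∧ z ≠ p} =
          (t+1) * s := by
        rw [Nat.card_congr (Equiv.subtypeEquivRight (q := fun z => Col inc p z ∧ p ≠ z)
          (fun z => by
            constructor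
            · exact fun h => h.1
            · exact fun h => ⟨h, h.1.symm, h.2.symm⟩))]
        exact hneigh p
      rw [hcard]
      simp [hApq, Matrix.one_apply, hJ]
      rfl
    · by_cases hcol : Col inc p q
      · have hcard : Nat.card {z : P // (Col inc p z ∧ p ≠ z) ∧ Col inc z q ∧ z ≠ q} =
            s - 1 := by
          rw [Nat.card_congr (Equiv.subtypeEquivRight
            (q := fun z => (Col inc p z ∧ z ≠ p) ∧ Col inc q z ∧ z ≠ q)
            (fun z => by
              constructor
              · exact fun h => ⟨⟨h.1.1, h.1.2.symm⟩, h.2.1.symm, h.2.2⟩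
              · exact fun h => ⟨⟨h.1.1, h.1.2.symm⟩, h.2.1.symm, h.2.2⟩))]
          exact ax.card_common_col hpq hcol hs
        rw [hcard]
        simp [hApq, Matrix.one_apply, hpq, hcol, hJ]
        push_cast [Nat.cast_sub hs]; ring
      · have hcard : Nat.card {z : P // (Col inc p z ∧ p ≠ z) ∧ Col inc z q ∧ z ≠ q} =
            t + 1 := by
          rw [Nat.card_congr (Equiv.subtypeEquivRight
            (q := fun z => (Col inc p z ∧ z ≠ p) ∧ Col inc q z ∧ z ≠ q)
            (fun z => by
              constructor
              · exact fun h => ⟨⟨h.1.1, h.1.2.symm⟩, h.2.1.symm, h.2.2⟩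
              · exact fun h => ⟨⟨h.1.1, h.1.2.symm⟩, h.2.1.symm, h.2.2⟩))]
          exact ax.card_common_opp hcol
        rw [hcard]
        simp [hApq, Matrix.one_apply, hpq, hcol, hJ]
        rfl
  -- the eigenmatrix
  set E : Matrix P P ℚ := (T + 1) • J - (S * T + 1) • (A + (T + 1) • (1 : Matrix P P ℚ))
    with hE
  have hJE : J * E = 0 := by
    rw [hE]
    simp only [Matrix.mul_sub, Matrix.mul_add, Matrix.mul_smul, Matrix.mul_one]
    rw [hJJ, hJA]
    module
  have hAE : A * E = (S - 1) • E := by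
    rw [hE]
    simp only [Matrix.mul_sub, Matrix.mul_add, Matrix.mul_smul, Matrix.mul_one]
    rw [hAJ, hAA]
    module
  have hEE : E * E = (-(S * T + 1) * (S + T)) • E := by
    nth_rewrite 1 [hE]
    simp only [Matrix.sub_mul, Matrix.add_mul, Matrix.smul_mul, Matrix.one_mul]
    rw [hJE, hAE]
    module
  -- idempotent scaling
  have hc : (-(S * T + 1) * (S + T)) ≠ 0 := by
    have h1 : (0:ℚ) < S * T + 1 := by positivity
    have h2 : (0:ℚ) < S + T := by
      have : (1:ℚ) ≤ S := by rw [hS]; exact_mod_cast hs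
      have : (0:ℚ) ≤ T := by positivity
      linarith
    intro h
    rw [neg_mul, neg_eq_zero, mul_eq_zero] at h
    rcases h with h | h <;> linarith
  set c : ℚ := (-(S * T + 1) * (S + T)) with hcdef
  have hM : (c⁻¹ • E) * (c⁻¹ • E) = c⁻¹ • E := by
    rw [Matrix.smul_mul, Matrix.mul_smul, hEE]
    rw [smul_smul, smul_smul]
    congr 1
    field_simp
  obtain ⟨N, hN⟩ := trace_idem hM
  -- compute the trace
  have htrA : A.trace = 0 := by
    unfold Matrix.trace
    simp [Matrix.diag, hApq]
  have htrJ : J.trace = (S + 1) * (S * T + 1) := by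
    unfold Matrix.trace
    simp only [Matrix.diag, hJ, Matrix.of_apply]
    rw [Finset.sum_const, Finset.card_univ, nsmul_eq_mul, mul_one,
      ← Nat.card_eq_fintype_card, hv]
  have htr1 : (1 : Matrix P P ℚ).trace = (S + 1) * (S * T + 1) := by
    rw [Matrix.trace_one, ← Nat.card_eq_fintype_card, hv]
  have htrE : E.trace = (T + 1) * ((S+1)*(S*T+1)) -
      (S * T + 1) * (0 + (T + 1) * ((S+1)*(S*T+1))) := by
    rw [hE, Matrix.trace_sub, Matrix.trace_smul, Matrix.trace_smul, Matrix.trace_add,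
      Matrix.trace_smul, htrJ, htrA, htr1]
    simp only [smul_eq_mul]
    try ring
  have htrM : (c⁻¹ • E).trace = c⁻¹ * E.trace := by
    rw [Matrix.trace_smul]; simp
  -- conclude
  have key : (S + T) * N = S * T * (S + 1) * (T + 1) := by
    have h1 : c * (N : ℚ) = E.trace := by
      rw [← hN, htrM]
      field_simp
    rw [htrE] at h1
    have h2 : (-(S*T+1)) * ((S + T) * N) = (-(S*T+1)) * (S * T * (S + 1) * (T + 1)) := by
      rw [hcdef] at h1
      nlinarith [h1]
    have h3 : (-(S*T+1)) ≠ 0 := by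
      have : (0:ℚ) < S * T + 1 := by positivity
      intro h; rw [neg_eq_zero] at h; linarith
    exact mul_left_cancel₀ h3 h2
  have keyn : (s + t) * N = s * t * (s + 1) * (t + 1) := by
    rw [hS, hT] at key
    exact_mod_cast key
  exact ⟨N, keyn.symm⟩

end Higman

end GQaux2


/-- A domestic collineation of a finite thick generalised quadrangle with no fixed points
and no fixed lines that maps at least one point and at least one line to opposites
satisfies `(s+t) ∣ (st+1)`; in particular `gcd(s,t) = 1` and
`|P₄| = (s²−1)(st+1)/(s+t)`. -/
theorem quadrangle_exceptional_domestic_no_fixed {P L : Type*} [Finite P] [Finite L]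
    (inc : P → L → Prop) (s t : ℕ) (hs : 2 ≤ s) (ht : 2 ≤ t)
    (hpoly : IsGenPolygon 4 inc) (hthick : IsThick inc) (hparams : HasParams inc s t)
    (θP : Equiv.Perm P) (θL : Equiv.Perm L) (hcoll : IsCollineation inc θP θL)
    (hdom : IsDomesticColl inc 4 θP θL)
    (hexcP : ∃ p : P, (incGraph inc).dist (Sum.inl p) (Sum.inl (θP p)) = 4)
    (hexcL : ∃ l : L, (incGraph inc).dist (Sum.inr l) (Sum.inr (θL l)) = 4)
    (hnofixP : ∀ p : P, θP p ≠ p) (hnofixL : ∀ l : L, θL l ≠ l) :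
    (s + t ∣ s * t + 1) ∧ Nat.Coprime s t ∧
    ((s : ℤ) + t) *
        (Nat.card {p : P // (incGraph inc).dist (Sum.inl p) (Sum.inl (θP p)) = 4}) =
      ((s : ℤ) ^ 2 - 1) * ((s : ℤ) * t + 1) := by
  classical
  obtain ⟨x₀, hx₀⟩ := hexcP
  obtain ⟨l₀, hl₀⟩ := hexcL
  have hconn := hpoly.connected
  have hle := hpoly.dist_le
  have hg : (incGraph inc).girth = 8 := by
    have := hpoly.girth_eq
    simpa using this
  have hg8 := GQaux.girth_cycles hg
  -- the combinatorial axioms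
  have ax : GQaux2.Ax inc s t :=
    { ptcard := hparams.1
      lncard := hparams.2
      uline := fun hpq hpl hql hpm hqm => GQaux.unique_line hg8 hpq hpl hql hpm hqm
      notri := fun h1 h2 h3 h4 h5 h6 h7 h8 h9 h10 h11 h12 =>
        GQaux.no_triangle hg8 h1 h2 h3 h4 h5 h6 h7 h8 h9 h10 h11 h12
      proj := fun h => GQaux.exists_proj hconn hle h }
  -- bridge between graph distance 4 and non-collinearity
  have hdist4P : ∀ p q : P, (incGraph inc).dist (Sum.inl p) (Sum.inl q) = 4 ↔
      (p ≠ q ∧ ¬ GQaux2.Col inc p q) := by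
    intro p q
    rw [GQaux.dist_four_iff hconn hle p q]
    exact Iff.rfl
  have hdist4L : ∀ l m : L, (incGraph inc).dist (Sum.inr l) (Sum.inr m) = 4 ↔
      (l ≠ m ∧ ¬ ∃ x, inc x l ∧ inc x m) := GQaux.dist_four_iff' hconn hle
  have hP4 : ∀ p : P, (incGraph inc).dist (Sum.inl p) (Sum.inl (θP p)) = 4 ↔
      ¬ GQaux2.Col inc p (θP p) := by
    intro p
    rw [hdist4P]
    exact ⟨fun h => h.2, fun h => ⟨fun he => hnofixP p he.symm, h⟩⟩
  have hL4 : ∀ l : L, (incGraph inc).dist (Sum.inr l) (Sum.inr (θL l)) = 4 ↔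
      ¬ ∃ x, inc x l ∧ inc x (θL l) := by
    intro l
    rw [hdist4L]
    exact ⟨fun h => h.2, fun h => ⟨fun he => hnofixL l he.symm, h⟩⟩
  -- domesticity in combinatorial form
  have hdomC : ∀ p l, inc p l → ¬ GQaux2.Col inc p (θP p) →
      ∃ x, inc x l ∧ inc x (θL l) := by
    intro p l hpl hopp
    by_contra hmeet
    exact hdom ⟨p, l, hpl, Or.inl ⟨(hP4 p).mpr hopp, (hL4 l).mpr hmeet⟩⟩
  have hdomC' : ∀ p l, inc p l → ¬ (∃ x, inc x l ∧ inc x (θL l)) →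
      GQaux2.Col inc p (θP p) := by
    intro p l hpl hmeet
    by_contra hopp
    exact hdom ⟨p, l, hpl, Or.inl ⟨(hP4 p).mpr hopp, (hL4 l).mpr hmeet⟩⟩
  -- the four counting equations
  set b := Nat.card {p : P // ¬ GQaux2.Col inc p (θP p)} with hbdef
  set a := Nat.card {p : P // GQaux2.Col inc p (θP p)} with hadef
  set c := Nat.card {l : L // ∃ x, inc x l ∧ inc x (θL l)} with hcdef
  set d := Nat.card {l : L // ¬ ∃ x, inc x l ∧ inc x (θL l)} with hddef
  have e1 : b * (t + 1) = c * (s - 1) :=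
    ax.keycount θP θL hcoll hnofixP hnofixL hdomC
  -- dual geometry
  have ax' : GQaux2.Ax (fun (l : L) (p : P) => inc p l) t s := ax.dual
  have e2' := ax'.keycount θL θP (fun l p => hcoll p l) hnofixL hnofixP
    (by
      intro l p hpl hncol
      rcases hdomC' p l hpl (by
        intro ⟨x, hx1, hx2⟩
        exact hncol ⟨x, hx1, hx2⟩) with ⟨m, hm1, hm2⟩
      exact ⟨m, hm1, hm2⟩)
  have e2 : d * (s + 1) = a * (t - 1) := by
    have ed : Nat.card {l : L // ¬ GQaux2.Col (fun (l : L) (p : P) => inc p l) l (θL l)} = d := by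
      rw [hddef]
      exact Nat.card_congr (Equiv.subtypeEquivRight (fun l => by
        constructor
        · exact fun h he => h (by obtain ⟨x, h1, h2⟩ := he; exact ⟨x, h1, h2⟩)
        · exact fun h he => h (by obtain ⟨x, h1, h2⟩ := he; exact ⟨x, h1, h2⟩)))
    have ea : Nat.card {p : P // ∃ x, inc p x ∧ inc (θP p) x} = a := by
      rw [hadef]
      exact Nat.card_congr (Equiv.subtypeEquivRight (fun p => by
        constructor
        · exact fun ⟨x, h1, h2⟩ => ⟨x, h1, h2⟩
        · exact fun ⟨x, h1, h2⟩ => ⟨x, h1, h2⟩))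
    rw [← ed, ← ea]
    exact e2'
  have e3 : a + b = (s + 1) * (s * t + 1) := by
    have h := GQaux2.card_partition (fun p : P => GQaux2.Col inc p (θP p))
    rw [← hadef, ← hbdef] at h
    rw [h]
    exact ax.card_total x₀
  have e4 : c + d = (t + 1) * (s * t + 1) := by
    have h := GQaux2.card_partition (fun l : L => ∃ x, inc x l ∧ inc x (θL l))
    rw [← hcdef, ← hddef] at h
    rw [h]
    have := ax'.card_total l₀
    rw [this]
    ring
  -- pass to the integers
  have hsZ : ((s - 1 : ℕ) : ℤ) = (s : ℤ) - 1 := by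
    have : 1 ≤ s := by omega
    push_cast [this]; ring
  have htZ : ((t - 1 : ℕ) : ℤ) = (t : ℤ) - 1 := by
    have : 1 ≤ t := by omega
    push_cast [this]; ring
  have E1 : (b : ℤ) * (t + 1) = (c : ℤ) * ((s : ℤ) - 1) := by
    rw [← hsZ]; exact_mod_cast e1
  have E2 : (d : ℤ) * (s + 1) = (a : ℤ) * ((t : ℤ) - 1) := by
    rw [← htZ]; exact_mod_cast e2
  have E3 : (a : ℤ) + b = ((s : ℤ) + 1) * ((s : ℤ) * t + 1) := by exact_mod_cast e3
  have E4 : (c : ℤ) + d = ((t : ℤ) + 1) * ((s : ℤ) * t + 1) := by exact_mod_cast e4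
  have key2 : 2 * (((s : ℤ) + t) * b) = 2 * ((((s : ℤ)) ^ 2 - 1) * ((s : ℤ) * t + 1)) := by
    linear_combination ((s : ℤ) + 1) * E1 - ((s : ℤ) - 1) * E2 -
      ((s : ℤ) - 1) * ((t : ℤ) - 1) * E3 + ((s : ℤ) - 1) * ((s : ℤ) + 1) * E4
  have key : ((s : ℤ) + t) * b = (((s : ℤ)) ^ 2 - 1) * ((s : ℤ) * t + 1) := by linarith
  -- Higman divisibility
  have hig : (s + t) ∣ s * t * (s + 1) * (t + 1) := ax.higman x₀ (by omega)
  have higZ : ((s : ℤ) + t) ∣ ((s : ℤ) * t * ((s : ℤ) + 1) * ((t : ℤ) + 1)) := by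
    obtain ⟨k, hk⟩ := hig
    exact ⟨(k : ℤ), by exact_mod_cast hk⟩
  have hdvd1 : ((s : ℤ) + t) ∣ (((s : ℤ)) ^ 2 - 1) * ((s : ℤ) * t + 1) := ⟨b, key.symm⟩
  have hdvd2 : ((s : ℤ) + t) ∣ ((s : ℤ)) ^ 2 * ((s : ℤ) * t + 1) := by
    have hid : ((s : ℤ)) ^ 2 * ((s : ℤ) * t + 1) =
        ((s : ℤ) + t) * ((s : ℤ) * ((s : ℤ) * t + t + 1)) -
          (s : ℤ) * t * ((s : ℤ) + 1) * ((t : ℤ) + 1) := by ring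
    rw [hid]
    exact dvd_sub (Dvd.intro _ rfl) higZ
  have hdvd3 : ((s : ℤ) + t) ∣ ((s : ℤ) * t + 1) := by
    have hid : ((s : ℤ) * t + 1) =
        ((s : ℤ)) ^ 2 * ((s : ℤ) * t + 1) - (((s : ℤ)) ^ 2 - 1) * ((s : ℤ) * t + 1) := by ring
    rw [hid]
    exact dvd_sub hdvd2 hdvd1
  have hdvdN : (s + t) ∣ (s * t + 1) := by
    have : ((s + t : ℕ) : ℤ) ∣ ((s * t + 1 : ℕ) : ℤ) := by push_cast; exact hdvd3
    exact_mod_cast this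
  refine ⟨hdvdN, ?_, ?_⟩
  · -- coprimality
    have h1 : Nat.gcd s t ∣ s + t := Nat.dvd_add (Nat.gcd_dvd_left s t) (Nat.gcd_dvd_right s t)
    have h2 : Nat.gcd s t ∣ s * t + 1 := h1.trans hdvdN
    have h3 : Nat.gcd s t ∣ s * t := Dvd.dvd.mul_right (Nat.gcd_dvd_left s t) t
    have h4 : Nat.gcd s t ∣ 1 := by
      have h5 : s * t + 1 - s * t = 1 := by omega
      have h6 := Nat.dvd_sub h2 h3
      rwa [h5] at h6
    exact Nat.dvd_one.mp h4
  · -- the displayed equation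
    have hcard : Nat.card {p : P // (incGraph inc).dist (Sum.inl p) (Sum.inl (θP p)) = 4} =
        b := by
      rw [hbdef]
      exact Nat.card_congr (Equiv.subtypeEquivRight (fun p => hP4 p))
    rw [hcard]
    exact key
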